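/- Let S ⊆ ℝⁿ be a set, K its closed convex hull, V = ℝ[x]_{≤1} the space of affine-linear polynomials, and P_S = {f ∈ V : f ≥ 0 on S}. If f ∈ P_S spans an extreme ray of the closed pointed cone P_S restricted to functions on the Zariski closure curve, then f is determined up to positive scaling within V by its zeros on S counted with multiplicities; in particular (for S a compact one-dimensional semialgebraic subset of a non-singular affine curve C with V ⊆ ℝ[C] of dimension n+1) any f spanning an extreme ray of P_{V,S} has at least n zeros in S counted with multiplicities. -/

import Mathlib

/-- `ordGe d f η m` expresses `ord_η(f) ≥ m`: the first `m` iterated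
`d/dt`-derivatives of `f` vanish at the point `η`. -/
def ordGe {A : Type} [CommRing A] [Algebra ℝ A] (d : Module.End ℝ A)
    (f : A) (η : A →ₐ[ℝ] ℝ) (m : ℕ) : Prop :=
  ∀ s < m, η ((d ^ s) f) = 0

set_option linter.unusedSectionVars false

namespace Stmt17Aux

variable {A : Type} [CommRing A] [Algebra ℝ A]
variable (t : A)
  (hfree : ∀ ω : Ω[A⁄ℝ], ∃! c : A, ω = c • KaehlerDifferential.D ℝ A t)
  (d : Module.End ℝ A)
  (hd : ∀ g : A, KaehlerDifferential.D ℝ A g = d g • KaehlerDifferential.D ℝ A t)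
  (η : A →ₐ[ℝ] ℝ)

theorem tau_mem : t - algebraMap ℝ A (η t) ∈ RingHom.ker (η : A →+* ℝ) := by
  simp [RingHom.mem_ker, AlgHom.commutes]

/-- the derivation `a ↦ [a - η a]` into `A ⧸ I²` -/
noncomputable def Dres : Derivation ℝ A (A ⧸ (RingHom.ker (η : A →+* ℝ) ^ 2)) where
  toLinearMap := (Ideal.Quotient.mkₐ ℝ (RingHom.ker (η : A →+* ℝ) ^ 2)).toLinearMap.comp
    (LinearMap.id - (Algebra.linearMap ℝ A).comp η.toLinearMap)
  map_one_eq_zero' := by simp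
  leibniz' a b := by
    set I : Ideal A := RingHom.ker (η : A →+* ℝ)
    have hsm : ∀ x y : A, x • (Ideal.Quotient.mk (I ^ 2) y) = Ideal.Quotient.mk (I ^ 2) (x * y) :=
      fun x y => (Submodule.Quotient.mk_smul (I ^ 2) x y).symm
    simp only [LinearMap.coe_comp, Function.comp_apply, LinearMap.sub_apply, LinearMap.id_apply,
      AlgHom.toLinearMap_apply, Ideal.Quotient.mkₐ_eq_mk, Algebra.linearMap_apply, hsm]
    rw [← map_add, Ideal.Quotient.mk_eq_mk_iff_sub_mem]
    have key : a * b - algebraMap ℝ A (η (a * b)) -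
        (a * (b - algebraMap ℝ A (η b)) + b * (a - algebraMap ℝ A (η a)))
        = -((a - algebraMap ℝ A (η a)) * (b - algebraMap ℝ A (η b))) := by
      rw [map_mul, map_mul]
      ring
    rw [key, pow_two]
    exact neg_mem (Ideal.mul_mem_mul (by simp [I, RingHom.mem_ker]) (by simp [I, RingHom.mem_ker]))

theorem Dres_apply (a : A) :
    Dres η a = Ideal.Quotient.mk (RingHom.ker (η : A →+* ℝ) ^ 2) (a - algebraMap ℝ A (η a)) := rfl

include t hfree d hd

theorem dcancel {a b : A}
    (h : a • KaehlerDifferential.D ℝ A t = b • KaehlerDifferential.D ℝ A t) :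
    a = b := by
  obtain ⟨c, -, hu⟩ := hfree (a • KaehlerDifferential.D ℝ A t)
  rw [hu a rfl, hu b h]

theorem dLeibniz (a b : A) : d (a * b) = a * d b + b * d a := by
  refine dcancel t hfree d hd ?_
  rw [← hd]
  rw [Derivation.leibniz, hd a, hd b, smul_comm a, smul_comm b, ← smul_assoc, ← smul_assoc,
    smul_eq_mul, smul_eq_mul, ← add_smul]
  congr 1
  ring

theorem d_t : d t = 1 := by
  refine dcancel t hfree d hd ?_
  rw [← hd, one_smul]

theorem d_alg (r : ℝ) : d (algebraMap ℝ A r) = 0 := by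
  refine dcancel t hfree d hd ?_
  rw [← hd, Derivation.map_algebraMap, zero_smul]


theorem d_tau : d (t - algebraMap ℝ A (η t)) = 1 := by
  rw [map_sub, d_t t hfree d hd, d_alg t hfree d hd, sub_zero]



/-- key smoothness-free cotangent lemma -/
theorem mem_sq {a : A} (ha : a ∈ RingHom.ker (η : A →+* ℝ)) (hda : η (d a) = 0) :
    a ∈ RingHom.ker (η : A →+* ℝ) ^ 2 := by
  set I : Ideal A := RingHom.ker (η : A →+* ℝ)
  have h1 : (Dres η).liftKaehlerDifferential (KaehlerDifferential.D ℝ A a) = Dres η a :=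
    Derivation.liftKaehlerDifferential_comp_D _ _
  rw [hd a, map_smul] at h1
  have h2 : (Dres η).liftKaehlerDifferential (KaehlerDifferential.D ℝ A t) = Dres η t :=
    Derivation.liftKaehlerDifferential_comp_D _ _
  rw [h2, Dres_apply, Dres_apply] at h1
  have hsm : d a • (Ideal.Quotient.mk (I ^ 2) (t - algebraMap ℝ A (η t)))
      = Ideal.Quotient.mk (I ^ 2) (d a * (t - algebraMap ℝ A (η t))) :=
    (Submodule.Quotient.mk_smul (I ^ 2) _ _).symm
  rw [hsm] at h1
  have hker : η a = 0 := ha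
  rw [hker, map_zero, sub_zero] at h1
  have hmem : d a * (t - algebraMap ℝ A (η t)) ∈ I ^ 2 := by
    rw [pow_two]
    exact Ideal.mul_mem_mul (RingHom.mem_ker.mpr hda) (tau_mem t η)
  have h0 := (Ideal.Quotient.eq_zero_iff_mem).2 hmem
  rw [h1] at h0
  exact (Ideal.Quotient.eq_zero_iff_mem).1 h0

/-- first-order Taylor: `a ≡ η(da)·τ mod I²` for `a ∈ I` -/
theorem taylor_one {a : A} (ha : a ∈ RingHom.ker (η : A →+* ℝ)) :
    a - algebraMap ℝ A (η (d a)) * (t - algebraMap ℝ A (η t))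
      ∈ RingHom.ker (η : A →+* ℝ) ^ 2 := by
  set τ : A := t - algebraMap ℝ A (η t) with hτ
  refine mem_sq t hfree d hd η ?_ ?_
  · exact sub_mem ha (Ideal.mul_mem_left _ _ (tau_mem t η))
  · have : d (algebraMap ℝ A (η (d a)) * τ)
        = algebraMap ℝ A (η (d a)) * d τ + τ * d (algebraMap ℝ A (η (d a))) :=
      dLeibniz t hfree d hd _ _
    rw [map_sub, this, d_tau t hfree d hd η, d_alg t hfree d hd, mul_one, mul_zero, add_zero]
    simp [AlgHom.commutes]

/-- `d` maps `I^(k+1)` into `I^k` -/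
theorem d_pow_mem : ∀ (k : ℕ) (h : A), h ∈ RingHom.ker (η : A →+* ℝ) ^ (k + 1) →
    d h ∈ RingHom.ker (η : A →+* ℝ) ^ k := by
  intro k
  induction k with
  | zero => intro h _; simp
  | succ k IH =>
    intro h hh
    rw [pow_succ] at hh
    refine Submodule.mul_induction_on hh ?_ ?_
    · intro m hm n hn
      rw [dLeibniz t hfree d hd m n]
      refine add_mem (Ideal.mul_mem_right _ _ hm) ?_
      have : n * d m ∈ RingHom.ker (η : A →+* ℝ) * RingHom.ker (η : A →+* ℝ) ^ k :=
        Ideal.mul_mem_mul hn (IH m hm)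
      rwa [← pow_succ'] at this
    · intro x y hx hy
      rw [map_add]; exact add_mem hx hy

theorem d_iter_mem : ∀ (s k : ℕ) (h : A), h ∈ RingHom.ker (η : A →+* ℝ) ^ (k + s) →
    (d ^ s) h ∈ RingHom.ker (η : A →+* ℝ) ^ k := by
  intro s
  induction s with
  | zero => intro k h hh; simpa using hh
  | succ s IH =>
    intro k h hh
    rw [pow_succ, Module.End.mul_apply]
    exact IH k (d h) (d_pow_mem t hfree d hd η _ _ hh)

theorem d_tau_pow : ∀ j : ℕ,
    d ((t - algebraMap ℝ A (η t)) ^ (j + 1)) = ((j : ℝ) + 1) • (t - algebraMap ℝ A (η t)) ^ j := by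
  intro j
  induction j with
  | zero => simpa using d_tau t hfree d hd η
  | succ j IH =>
    set τ : A := t - algebraMap ℝ A (η t)
    have : τ ^ (j + 2) = τ * τ ^ (j + 1) := by ring
    rw [this, dLeibniz t hfree d hd, IH, d_tau t hfree d hd η, mul_one]
    rw [mul_smul_comm, ← pow_succ']
    module

theorem eta_d_tau_pow : ∀ k : ℕ,
    η ((d ^ k) ((t - algebraMap ℝ A (η t)) ^ k)) = k.factorial := by
  intro k
  induction k with
  | zero => simp
  | succ k IH =>
    rw [pow_succ d, Module.End.mul_apply, d_tau_pow t hfree d hd η k, map_smul, map_smul,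
      smul_eq_mul, IH]
    push_cast [Nat.factorial_succ]
    ring

theorem taylor : ∀ (k : ℕ) (h : A), h ∈ RingHom.ker (η : A →+* ℝ) ^ k →
    h - algebraMap ℝ A (η ((d ^ k) h) / k.factorial) * (t - algebraMap ℝ A (η t)) ^ k
      ∈ RingHom.ker (η : A →+* ℝ) ^ (k + 1) := by
  intro k
  induction k with
  | zero =>
    intro h _
    simpa using (show h - algebraMap ℝ A (η h) ∈ RingHom.ker (η : A →+* ℝ) by
      simp [RingHom.mem_ker])
  | succ k IH =>
    intro h hh
    rw [pow_succ] at hh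
    refine Submodule.mul_induction_on hh ?_ ?_
    · intro m hm n hn
      have h1 := IH m hm
      have h2 := taylor_one t hfree d hd η hn
      set I : Ideal A := RingHom.ker (η : A →+* ℝ) with hI
      set τ : A := t - algebraMap ℝ A (η t) with hτ
      set α : ℝ := η ((d ^ k) m) / k.factorial with hα
      set β : ℝ := η (d n) with hβ
      have hA : m * n - algebraMap ℝ A (α * β) * τ ^ (k + 1) ∈ I ^ (k + 2) := by
        have expand : m * n - algebraMap ℝ A (α * β) * τ ^ (k + 1)
            = m * (n - algebraMap ℝ A β * τ)
              + (algebraMap ℝ A β * τ) * (m - algebraMap ℝ A α * τ ^ k) := by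
          rw [map_mul]; ring
        rw [expand]
        refine add_mem ?_ ?_
        · have := Ideal.mul_mem_mul hm h2
          rwa [← pow_add] at this
        · have hm1 : (algebraMap ℝ A β * τ) ∈ I := Ideal.mul_mem_left _ _ (tau_mem t η)
          have := Ideal.mul_mem_mul hm1 h1
          rwa [← pow_succ'] at this
      have hB : η ((d ^ (k + 1)) (m * n)) = ((k + 1).factorial : ℝ) * (α * β) := by
        have hsplit : m * n = algebraMap ℝ A (α * β) * τ ^ (k + 1)
            + (m * n - algebraMap ℝ A (α * β) * τ ^ (k + 1)) := by ring
        rw [hsplit, map_add, map_add]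
        have hz : η ((d ^ (k + 1)) (m * n - algebraMap ℝ A (α * β) * τ ^ (k + 1))) = 0 := by
          have hA' : m * n - algebraMap ℝ A (α * β) * τ ^ (k + 1) ∈ I ^ (1 + (k + 1)) := by
            rw [show 1 + (k + 1) = k + 2 by omega]; exact hA
          have := d_iter_mem t hfree d hd η (k + 1) 1 _ hA'
          rw [pow_one] at this
          exact this
        rw [hz, add_zero]
        have hsm : algebraMap ℝ A (α * β) * τ ^ (k + 1) = (α * β) • τ ^ (k + 1) :=
          (Algebra.smul_def _ _).symm
        rw [hsm, map_smul, map_smul, smul_eq_mul, eta_d_tau_pow t hfree d hd η (k + 1)]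
        ring
      rw [hB, mul_div_cancel_left₀ _ (by exact_mod_cast (k + 1).factorial_ne_zero)]
      exact hA
    · intro x y hx hy
      have e1 : (x + y) - algebraMap ℝ A (η ((d ^ (k + 1)) (x + y)) / (k + 1).factorial)
            * (t - algebraMap ℝ A (η t)) ^ (k + 1)
          = (x - algebraMap ℝ A (η ((d ^ (k + 1)) x) / (k + 1).factorial)
              * (t - algebraMap ℝ A (η t)) ^ (k + 1))
            + (y - algebraMap ℝ A (η ((d ^ (k + 1)) y) / (k + 1).factorial)
              * (t - algebraMap ℝ A (η t)) ^ (k + 1)) := by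
        rw [map_add, map_add, add_div, map_add, add_mul]; ring
      rw [e1]
      exact add_mem hx hy

theorem mem_pow_of_ordGe (h : A) : ∀ m : ℕ, (∀ s < m, η ((d ^ s) h) = 0) →
    h ∈ RingHom.ker (η : A →+* ℝ) ^ m := by
  intro m
  induction m with
  | zero => intro _; simp
  | succ m IH =>
    intro hord
    have hm : h ∈ RingHom.ker (η : A →+* ℝ) ^ m := IH (fun s hs => hord s (by omega))
    have := taylor t hfree d hd η m h hm
    rwa [hord m (by omega), zero_div, map_zero, zero_mul, sub_zero] at this

theorem ordGe_of_mem_pow (h : A) (m : ℕ) (hm : h ∈ RingHom.ker (η : A →+* ℝ) ^ m) :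
    ∀ s < m, η ((d ^ s) h) = 0 := by
  intro s hs
  have h1 : h ∈ RingHom.ker (η : A →+* ℝ) ^ ((m - s) + s) := by
    rw [show (m - s) + s = m by omega]; exact hm
  have h2 := d_iter_mem t hfree d hd η s (m - s) h h1
  have h3 : (d ^ s) h ∈ RingHom.ker (η : A →+* ℝ) ^ 1 :=
    Ideal.pow_le_pow_right (by omega) h2
  rw [pow_one] at h3
  exact h3

theorem exists_ord [IsDomain A] [IsNoetherianRing A] (h : A) (h0 : h ≠ 0) :
    ∃ m : ℕ, h ∈ RingHom.ker (η : A →+* ℝ) ^ m ∧ h ∉ RingHom.ker (η : A →+* ℝ) ^ (m + 1) := by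
  classical
  have hne : RingHom.ker (η : A →+* ℝ) ≠ ⊤ := by
    intro e
    have h1 : (1 : A) ∈ RingHom.ker (η : A →+* ℝ) := by rw [e]; trivial
    have h2 : η 1 = 0 := h1
    simp at h2
  have hbot := Ideal.iInf_pow_eq_bot_of_isDomain (RingHom.ker (η : A →+* ℝ)) hne
  have hex : ∃ N, h ∉ RingHom.ker (η : A →+* ℝ) ^ N := by
    by_contra hc
    push_neg at hc
    have : h ∈ ⨅ i, RingHom.ker (η : A →+* ℝ) ^ i := Submodule.mem_iInf _ |>.2 hc
    rw [hbot] at this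
    exact h0 this
  have hN := Nat.find_spec hex
  have hN0 : Nat.find hex ≠ 0 := by
    intro e
    rw [e] at hN
    simp at hN
  refine ⟨Nat.find hex - 1, ?_, ?_⟩
  · have := Nat.find_min hex (show Nat.find hex - 1 < Nat.find hex by omega)
    exact not_not.mp this
  · rw [show Nat.find hex - 1 + 1 = Nat.find hex by omega]
    exact hN

theorem div_lemma [IsDomain A] [IsNoetherianRing A] (f g : A) (m : ℕ)
    (hfI : f ∈ RingHom.ker (η : A →+* ℝ))
    (hfm : f ∈ RingHom.ker (η : A →+* ℝ) ^ m)
    (hfm1 : f ∉ RingHom.ker (η : A →+* ℝ) ^ (m + 1))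
    (hg : g ∈ RingHom.ker (η : A →+* ℝ) ^ m) :
    ∃ u p : A, η u ≠ 0 ∧ u * g = p * f := by
  set I : Ideal A := RingHom.ker (η : A →+* ℝ) with hI
  set τ : A := t - algebraMap ℝ A (η t) with hτ
  set γ : ℝ := η ((d ^ m) f) / m.factorial with hγdef
  have lead : f - algebraMap ℝ A γ * τ ^ m ∈ I ^ (m + 1) := taylor t hfree d hd η m f hfm
  have hγ : γ ≠ 0 := by
    intro e
    apply hfm1
    rw [e, map_zero, zero_mul, sub_zero] at lead
    exact lead
  have stepB : ∀ N : ℕ, ∃ p : A, g - p * f ∈ I ^ (m + N) := by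
    intro N
    induction N with
    | zero => exact ⟨0, by simpa using hg⟩
    | succ N IH =>
      obtain ⟨p, hp⟩ := IH
      set β : ℝ := η ((d ^ (m + N)) (g - p * f)) / (m + N).factorial with hβdef
      have ht := taylor t hfree d hd η (m + N) _ hp
      refine ⟨p + algebraMap ℝ A (β / γ) * τ ^ N, ?_⟩
      have key : algebraMap ℝ A (β / γ) * algebraMap ℝ A γ = algebraMap ℝ A β := by
        rw [← map_mul, div_mul_cancel₀ _ hγ]
      have idd : g - (p + algebraMap ℝ A (β / γ) * τ ^ N) * f
          = ((g - p * f) - algebraMap ℝ A β * τ ^ (m + N))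
            - (algebraMap ℝ A (β / γ) * τ ^ N) * (f - algebraMap ℝ A γ * τ ^ m) := by
        rw [← key, pow_add τ m N]
        ring
      rw [show m + (N + 1) = (m + N) + 1 by omega, idd]
      refine sub_mem ht ?_
      rw [mul_assoc]
      refine Ideal.mul_mem_left _ _ ?_
      have := Ideal.mul_mem_mul (Ideal.pow_mem_pow (tau_mem t η) N) lead
      rwa [← pow_add, show N + (m + 1) = (m + N) + 1 by omega] at this
  -- pass to the quotient by (f) and localize
  set Ispan : Ideal A := Ideal.span {f} with hIspan
  have hspan_le : Ispan ≤ I := by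
    rw [hIspan, Ideal.span_le, Set.singleton_subset_iff]
    exact hfI
  set π : A →+* A ⧸ Ispan := Ideal.Quotient.mk Ispan with hπ
  set ηb : A ⧸ Ispan →+* ℝ :=
    Ideal.Quotient.lift Ispan (η : A →+* ℝ) (fun a ha => hspan_le ha) with hηbdef
  have hηb : ∀ a : A, ηb (π a) = η a := fun a => Ideal.Quotient.lift_mk _ _ _
  set J : Ideal (A ⧸ Ispan) := RingHom.ker ηb with hJ
  have hJmax : J.IsMaximal := by
    refine RingHom.ker_isMaximal_of_surjective ηb (fun r => ⟨π (algebraMap ℝ A r), ?_⟩)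
    rw [hηb, AlgHom.commutes]
    exact Algebra.algebraMap_self_apply r
  haveI : J.IsPrime := hJmax.isPrime
  have hπI : Ideal.map π I ≤ J := by
    rw [Ideal.map_le_iff_le_comap]
    intro x hx
    have : ηb (π x) = 0 := by rw [hηb]; exact hx
    exact this
  have hgJ : ∀ N : ℕ, π g ∈ J ^ N := by
    intro N
    obtain ⟨p, hp⟩ := stepB N
    have hz : π (p * f) = 0 :=
      Ideal.Quotient.eq_zero_iff_mem.mpr (Ideal.mul_mem_left _ _ (Ideal.subset_span rfl))
    have hπg : π g = π (g - p * f) := by rw [map_sub, hz, sub_zero]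
    rw [hπg]
    have h1 : g - p * f ∈ I ^ N := Ideal.pow_le_pow_right (by omega) hp
    have h2 := Ideal.mem_map_of_mem π h1
    rw [Ideal.map_pow] at h2
    exact Ideal.pow_right_mono hπI N h2
  haveI : IsNoetherianRing (A ⧸ Ispan) := inferInstance
  haveI hLnoeth : IsNoetherianRing (Localization.AtPrime J) :=
    IsLocalization.isNoetherianRing J.primeCompl _ inferInstance
  have hmax := Localization.AtPrime.map_eq_maximalIdeal (I := J)
  have hzero : algebraMap (A ⧸ Ispan) (Localization.AtPrime J) (π g) = 0 := by
    have hmem : ∀ N : ℕ, algebraMap (A ⧸ Ispan) (Localization.AtPrime J) (π g)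
        ∈ (IsLocalRing.maximalIdeal (Localization.AtPrime J)) ^ N := by
      intro N
      have h2 := Ideal.mem_map_of_mem (algebraMap (A ⧸ Ispan) (Localization.AtPrime J)) (hgJ N)
      rw [Ideal.map_pow, hmax] at h2
      exact h2
    have hb := Ideal.iInf_pow_eq_bot_of_isLocalRing
      (IsLocalRing.maximalIdeal (Localization.AtPrime J))
      (Ideal.IsMaximal.ne_top (IsLocalRing.maximalIdeal.isMaximal _))
    have hin : algebraMap (A ⧸ Ispan) (Localization.AtPrime J) (π g)
        ∈ ⨅ i, (IsLocalRing.maximalIdeal (Localization.AtPrime J)) ^ i :=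
      Submodule.mem_iInf _ |>.2 hmem
    rw [hb] at hin
    exact hin
  obtain ⟨⟨u0, hu0⟩, hu⟩ :=
    (IsLocalization.map_eq_zero_iff J.primeCompl (Localization.AtPrime J) (π g)).1 hzero
  obtain ⟨u, rfl⟩ := Ideal.Quotient.mk_surjective u0
  have hπug : π (u * g) = 0 := by rw [map_mul]; exact hu
  obtain ⟨p, hp⟩ := Ideal.mem_span_singleton'.mp (Ideal.Quotient.eq_zero_iff_mem.mp hπug)
  refine ⟨u, p, ?_, hp.symm⟩
  intro he
  exact hu0 (show π u ∈ J from by rw [hJ, RingHom.mem_ker, hηb]; exact he)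

theorem bound (S : Set (A →ₐ[ℝ] ℝ))
    (hScpt : IsCompact ((fun η : A →ₐ[ℝ] ℝ => (η : A → ℝ)) '' S))
    (f : A) (hfS : ∀ η ∈ S, 0 ≤ η f) (g : A)
    (hdiv : ∀ η ∈ S, η f = 0 → ∃ u p : A, η u ≠ 0 ∧ u * g = p * f) :
    ∃ C : ℝ, 0 < C ∧ ∀ η ∈ S, |η g| ≤ C * η f := by
  classical
  have hcl : ∀ η ∈ S, ∃ (C : ℝ) (U : Set (A → ℝ)), 0 ≤ C ∧ IsOpen U ∧ (⇑η ∈ U) ∧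
      ∀ η' ∈ S, (⇑η' ∈ U) → |η' g| ≤ C * η' f := by
    intro η hη
    by_cases h0 : η f = 0
    · obtain ⟨u, p, hu, hup⟩ := hdiv η hη h0
      have hηu : 0 < |η u| := abs_pos.mpr hu
      refine ⟨2 * (|η p| + 1) / |η u|,
        {x : A → ℝ | |η u| / 2 < |x u| ∧ |x p| < |η p| + 1}, by positivity, ?_, ?_, ?_⟩
      · exact IsOpen.inter (isOpen_lt continuous_const ((continuous_apply u).abs))
          (isOpen_lt ((continuous_apply p).abs) continuous_const)
      · exact ⟨half_lt_self hηu, lt_add_one _⟩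
      · rintro η' hη' ⟨hx1, hx2⟩
        have hu' : 0 < |η' u| := lt_trans (by positivity) hx1
        have hf' : 0 ≤ η' f := hfS η' hη'
        have hrel : η' u * η' g = η' p * η' f := by
          have h := congrArg η' hup
          rwa [map_mul, map_mul] at h
        have h3 : |η' u| * |η' g| = |η' p| * η' f := by
          rw [← abs_mul, hrel, abs_mul, abs_of_nonneg hf']
        have h4 : |η' g| = (|η' p| * η' f) / |η' u| := by
          rw [← h3, mul_comm, mul_div_assoc, div_self (ne_of_gt hu'), mul_one]
        rw [h4]
        calc (|η' p| * η' f) / |η' u| ≤ ((|η p| + 1) * η' f) / (|η u| / 2) := by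
              apply div_le_div₀ (by positivity)
                (mul_le_mul_of_nonneg_right (le_of_lt hx2) hf') (by positivity) (le_of_lt hx1)
        _ = 2 * (|η p| + 1) / |η u| * η' f := by
              field_simp
    · have hpos : 0 < η f := lt_of_le_of_ne (hfS η hη) (Ne.symm h0)
      refine ⟨2 * (|η g| + 1) / (η f),
        {x : A → ℝ | η f / 2 < x f ∧ |x g| < |η g| + 1}, by positivity, ?_, ?_, ?_⟩
      · exact IsOpen.inter (isOpen_lt continuous_const (continuous_apply f))
          (isOpen_lt ((continuous_apply g).abs) continuous_const)
      · exact ⟨half_lt_self hpos, lt_add_one _⟩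
      · rintro η' hη' ⟨hx1, hx2⟩
        have h5 : 1 ≤ η' f / (η f / 2) := (one_le_div (by positivity)).2 (le_of_lt hx1)
        calc |η' g| ≤ (|η g| + 1) * 1 := by simpa using le_of_lt hx2
        _ ≤ (|η g| + 1) * (η' f / (η f / 2)) :=
              mul_le_mul_of_nonneg_left h5 (by positivity)
        _ = 2 * (|η g| + 1) / η f * η' f := by
              field_simp
  choose! C U hC hUopen hmemU hboundU using hcl
  have hcover : ((fun η : A →ₐ[ℝ] ℝ => (η : A → ℝ)) '' S) ⊆ ⋃ (i : ↥S), U i := by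
    rintro x ⟨η, hη, rfl⟩
    exact Set.mem_iUnion.2 ⟨⟨η, hη⟩, hmemU η hη⟩
  obtain ⟨fs, hfs⟩ := hScpt.elim_finite_subcover (fun i : ↥S => U ↑i)
    (fun i => hUopen ↑i i.2) hcover
  have hsum0 : 0 ≤ ∑ i ∈ fs, C ↑i := Finset.sum_nonneg fun i _ => hC ↑i i.2
  refine ⟨1 + ∑ i ∈ fs, C ↑i, by linarith, ?_⟩
  intro η' hη'
  have hxc : ⇑η' ∈ ⋃ i ∈ fs, U ↑i := hfs ⟨η', hη', rfl⟩
  rw [Set.mem_iUnion₂] at hxc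
  obtain ⟨i, hifs, hxU⟩ := hxc
  have h6 := hboundU ↑i i.2 η' hη' hxU
  have h7 : C ↑i ≤ 1 + ∑ j ∈ fs, C ↑j := by
    have := Finset.single_le_sum (f := fun j : ↥S => C ↑j) (fun j _ => hC ↑j j.2) hifs
    linarith
  calc |η' g| ≤ C ↑i * η' f := h6
  _ ≤ (1 + ∑ j ∈ fs, C ↑j) * η' f := mul_le_mul_of_nonneg_right h7 (hfS η' hη')

theorem extreme_ray [IsDomain A] [IsNoetherianRing A]
    (S : Set (A →ₐ[ℝ] ℝ))
    (hScpt : IsCompact ((fun η : A →ₐ[ℝ] ℝ => (η : A → ℝ)) '' S))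
    (V : Submodule ℝ A) (P : Set A)
    (hP : P = {g : A | g ∈ V ∧ ∀ η ∈ S, 0 ≤ η g})
    (f : A) (hf : f ∈ P) (hf0 : f ≠ 0)
    (hext : ∀ p ∈ P, ∀ q ∈ P,
      p + q ∈ {x : A | ∃ a : ℝ, 0 ≤ a ∧ x = a • f} →
        (p ∈ {x : A | ∃ a : ℝ, 0 ≤ a ∧ x = a • f} ∧
          q ∈ {x : A | ∃ a : ℝ, 0 ≤ a ∧ x = a • f}))
    (g : A) (hgV : g ∈ V)
    (hgord : ∀ η ∈ S, ∀ m : ℕ, (∀ s < m, η ((d ^ s) f) = 0) → (∀ s < m, η ((d ^ s) g) = 0)) :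
    ∃ c : ℝ, g = c • f := by
  have hfV : f ∈ V := (hP ▸ hf).1
  have hfS : ∀ η ∈ S, 0 ≤ η f := (hP ▸ hf).2
  have hdiv : ∀ η ∈ S, η f = 0 → ∃ u p : A, η u ≠ 0 ∧ u * g = p * f := by
    intro η hη h0
    obtain ⟨m, hm, hm1⟩ := exists_ord t hfree d hd η f hf0
    have hford := ordGe_of_mem_pow t hfree d hd η f m hm
    have hgm := mem_pow_of_ordGe t hfree d hd η g m (hgord η hη m hford)
    exact div_lemma t hfree d hd η f g m (RingHom.mem_ker.mpr h0) hm hm1 hgm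
  obtain ⟨C, hC, hCb⟩ := bound t hfree d hd S hScpt f hfS g hdiv
  have hplus : f + (1 / C) • g ∈ P := by
    rw [hP]
    refine ⟨V.add_mem hfV (V.smul_mem _ hgV), fun η hη => ?_⟩
    rw [map_add, map_smul, smul_eq_mul]
    have h1 : -(C * η f) ≤ η g := neg_le_of_abs_le (hCb η hη)
    have h2 : 0 ≤ C * η f + η g := by linarith
    have h3 : η f + (1 / C) * η g = (1 / C) * (C * η f + η g) := by
      field_simp
    rw [h3]
    positivity
  have hminus : f - (1 / C) • g ∈ P := by
    rw [hP]
    refine ⟨V.sub_mem hfV (V.smul_mem _ hgV), fun η hη => ?_⟩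
    rw [map_sub, map_smul, smul_eq_mul]
    have h1 : η g ≤ C * η f := le_of_abs_le (hCb η hη)
    have h2 : 0 ≤ C * η f - η g := by linarith
    have h3 : η f - (1 / C) * η g = (1 / C) * (C * η f - η g) := by
      field_simp
    rw [h3]
    positivity
  have hsum : (f + (1 / C) • g) + (f - (1 / C) • g) ∈ {x : A | ∃ a : ℝ, 0 ≤ a ∧ x = a • f} :=
    ⟨2, by norm_num, by module⟩
  obtain ⟨⟨a, ha0, hae⟩, -⟩ := hext _ hplus _ hminus hsum
  refine ⟨C * (a - 1), ?_⟩
  have hCne : C ≠ 0 := ne_of_gt hC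
  calc g = C • ((1 / C) • g) := by
        rw [smul_smul, mul_one_div, div_self hCne, one_smul]
  _ = C • ((f + (1 / C) • g) - f) := by
        congr 1
        module
  _ = C • (a • f - f) := by rw [hae]
  _ = (C * (a - 1)) • f := by module

end Stmt17Aux

/-- Let `C` be an irreducible non-singular affine curve over `ℝ`,
`S ⊆ C(ℝ)` compact without isolated points, `V ⊆ ℝ[C]` of dimension `n+1`,
and `P_{V,S} = {f ∈ V : f|_S ≥ 0}`.  If `f` spans an extreme ray of
`P_{V,S}`, then `f` is determined up to positive scaling by its zeros on `S`
counted with multiplicities; in particular `f` has at least `n` zeros in `S`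
counted with multiplicities. -/
theorem stmt17 (A : Type) [CommRing A] [IsDomain A] [Algebra ℝ A]
    [Algebra.FiniteType ℝ A] [Algebra.Smooth ℝ A]
    (hdim : ringKrullDim A = 1)
    (t : A)
    (hfree : ∀ ω : Ω[A⁄ℝ], ∃! c : A, ω = c • KaehlerDifferential.D ℝ A t)
    (d : Module.End ℝ A)
    (hd : ∀ g : A, KaehlerDifferential.D ℝ A g =
      d g • KaehlerDifferential.D ℝ A t)
    (S : Set (A →ₐ[ℝ] ℝ))
    (hScpt : IsCompact ((fun η : A →ₐ[ℝ] ℝ => (η : A → ℝ)) '' S))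
    (hSnoiso : ∀ x ∈ (fun η : A →ₐ[ℝ] ℝ => (η : A → ℝ)) '' S,
      x ∈ closure (((fun η : A →ₐ[ℝ] ℝ => (η : A → ℝ)) '' S) \ {x}))
    (hSne : S.Nonempty)
    (n : ℕ) (V : Submodule ℝ A) (hV : Module.finrank ℝ V = n + 1)
    (P : Set A) (hP : P = {g : A | g ∈ V ∧ ∀ η ∈ S, 0 ≤ η g})
    (f : A) (hf : f ∈ P) (hf0 : f ≠ 0)
    (hext : ∀ p ∈ P, ∀ q ∈ P,
      p + q ∈ {x : A | ∃ a : ℝ, 0 ≤ a ∧ x = a • f} →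
        (p ∈ {x : A | ∃ a : ℝ, 0 ≤ a ∧ x = a • f} ∧
          q ∈ {x : A | ∃ a : ℝ, 0 ≤ a ∧ x = a • f})) :
    -- `f` is determined up to positive scaling by its zeros with multiplicities
    (∀ g ∈ P, g ≠ 0 →
      (∀ η ∈ S, ∀ m : ℕ, ordGe d f η m ↔ ordGe d g η m) →
        ∃ c : ℝ, 0 < c ∧ g = c • f) ∧
    -- `f` has at least `n` zeros in `S`, counted with multiplicities
    (∃ (r : ℕ) (ξ : Fin r → (A →ₐ[ℝ] ℝ)) (b : Fin r → ℕ),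
      Function.Injective ξ ∧ (∀ i, ξ i ∈ S) ∧ (∀ i, 1 ≤ b i) ∧
      n ≤ ∑ i, b i ∧ ∀ i, ordGe d f (ξ i) (b i)) := by
  classical
  haveI : IsNoetherianRing A := Algebra.FiniteType.isNoetherianRing ℝ A
  have hfV : f ∈ V := (hP ▸ hf).1
  have hfS : ∀ η ∈ S, 0 ≤ η f := (hP ▸ hf).2
  -- f is strictly positive somewhere on S
  have hfpos : ∃ η₀ ∈ S, 0 < η₀ f := by
    by_contra hc
    push_neg at hc
    have hfz : ∀ η ∈ S, η f = 0 := fun η hη => le_antisymm (hc η hη) (hfS η hη)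
    have hnegP : -f ∈ P := by
      rw [hP]
      exact ⟨V.neg_mem hfV, fun η hη => by rw [map_neg, hfz η hη, neg_zero]⟩
    obtain ⟨-, ⟨a, ha, hae⟩⟩ := hext f hf (-f) hnegP ⟨0, le_refl 0, by simp⟩
    have hz : (a + 1) • f = 0 := by
      rw [add_smul, one_smul, ← hae, neg_add_cancel]
    haveI : NoZeroSMulDivisors ℝ A :=
      inferInstance
    rcases smul_eq_zero.mp hz with h | h
    · linarith
    · exact hf0 h
  constructor
  · -- part 1
    intro g hg hg0 hiff
    have hgV : g ∈ V := (hP ▸ hg).1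
    have hgS : ∀ η ∈ S, 0 ≤ η g := (hP ▸ hg).2
    obtain ⟨c, hc⟩ := Stmt17Aux.extreme_ray t hfree d hd S hScpt V P hP f hf hf0 hext g hgV
      (fun η hη m hford => (hiff η hη m).1 hford)
    refine ⟨c, ?_, hc⟩
    obtain ⟨η₀, hη₀, hpos⟩ := hfpos
    have h1 : η₀ g = c * η₀ f := by rw [hc, map_smul, smul_eq_mul]
    have h2 : 0 ≤ η₀ g := hgS η₀ hη₀
    have hcne : c ≠ 0 := by
      intro e
      apply hg0
      rw [hc, e, zero_smul]
    rcases lt_trichotomy c 0 with h | h | h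
    · nlinarith
    · exact absurd h hcne
    · exact h
  · -- part 2
    by_cases hZ : {η : A →ₐ[ℝ] ℝ | η ∈ S ∧ η f = 0}.Infinite
    · obtain ⟨fsZ, hsub, hcard⟩ := hZ.exists_subset_card_eq n
      let e := fsZ.equivFin
      refine ⟨n, fun i => ↑(e.symm (Fin.cast hcard.symm i)), fun _ => 1, ?_, ?_, ?_, ?_, ?_⟩
      · intro i j hij
        have h1 : e.symm (Fin.cast hcard.symm i) = e.symm (Fin.cast hcard.symm j) :=
          Subtype.coe_injective hij
        have h2 := e.symm.injective h1
        simpa [Fin.ext_iff] using h2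
      · intro i
        exact (hsub (e.symm (Fin.cast hcard.symm i)).2).1
      · intro i; exact le_refl 1
      · simp
      · intro i s hs
        interval_cases s
        have := (hsub (e.symm (Fin.cast hcard.symm i)).2).2
        simpa using this
    · have hZfin : Set.Finite _ := Set.not_infinite.mp hZ
      set ZF := hZfin.toFinset with hZF
      let e := ZF.equivFin
      have horder : ∀ η : A →ₐ[ℝ] ℝ, ∃ m : ℕ,
          f ∈ RingHom.ker (η : A →+* ℝ) ^ m ∧ f ∉ RingHom.ker (η : A →+* ℝ) ^ (m + 1) :=
        fun η => Stmt17Aux.exists_ord t hfree d hd η f hf0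
      choose ordf hmemf hnotmemf using horder
      set ξ : Fin ZF.card → (A →ₐ[ℝ] ℝ) := fun i => ↑(e.symm i) with hξ
      have hξS : ∀ i, ξ i ∈ S := fun i => (hZfin.mem_toFinset.mp (e.symm i).2).1
      have hξz : ∀ i, (ξ i) f = 0 := fun i => (hZfin.mem_toFinset.mp (e.symm i).2).2
      refine ⟨ZF.card, ξ, fun i => ordf (ξ i), ?_, hξS, ?_, ?_, ?_⟩
      · intro i j hij
        exact e.symm.injective (Subtype.coe_injective hij)
      · intro i
        show 1 ≤ ordf (ξ i)
        by_contra hb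
        have hb0 : ordf (ξ i) = 0 := by omega
        have := hnotmemf (ξ i)
        rw [hb0, zero_add, pow_one] at this
        exact this (RingHom.mem_ker.mpr (hξz i))
      · -- the rank-nullity count
        show n ≤ ∑ i : Fin ZF.card, ordf (ξ i)
        haveI : FiniteDimensional ℝ V :=
          Module.finite_of_finrank_pos (by rw [hV]; omega)
        let Φ : V →ₗ[ℝ] ((i : Fin ZF.card) → (Fin (ordf (ξ i)) → ℝ)) :=
          { toFun := fun v i s => (ξ i) ((d ^ (s : ℕ)) (v : A))
            map_add' := by intro v w; funext i s; simp
            map_smul' := by intro c v; funext i s; simp }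
        have hker : LinearMap.ker Φ ≤ (ℝ ∙ (⟨f, hfV⟩ : V)) := by
          intro v hv
          have hcomp : ∀ (i : Fin ZF.card) (s : Fin (ordf (ξ i))),
              (ξ i) ((d ^ (s : ℕ)) (v : A)) = 0 := by
            intro i s
            have h0 : Φ v = 0 := LinearMap.mem_ker.mp hv
            exact congrFun (congrFun h0 i) s
          have hvord : ∀ η ∈ S, ∀ m : ℕ,
              (∀ s < m, η ((d ^ s) f) = 0) → (∀ s < m, η ((d ^ s) (v : A)) = 0) := by
            intro η hη m hford s hs
            by_cases hz : η f = 0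
            · have hmemZ : η ∈ ZF := hZfin.mem_toFinset.mpr ⟨hη, hz⟩
              set i := e ⟨η, hmemZ⟩ with hi
              have hei : ξ i = η := by rw [hξ]; simp [hi]
              have hmle : m ≤ ordf (ξ i) := by
                by_contra hmgt
                have h1 : f ∈ RingHom.ker (η : A →+* ℝ) ^ m :=
                  Stmt17Aux.mem_pow_of_ordGe t hfree d hd η f m hford
                have h2 : f ∈ RingHom.ker (η : A →+* ℝ) ^ (ordf (ξ i) + 1) :=
                  Ideal.pow_le_pow_right (by omega) h1
                have hoeq : ordf (ξ i) = ordf η := by rw [hei]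
                have h4 := hnotmemf η
                rw [← hoeq] at h4
                exact h4 h2
              have h5 : (ξ i) ((d ^ s) ↑v) = 0 := hcomp i ⟨s, by omega⟩
              rwa [hei] at h5
            · rcases Nat.eq_zero_or_pos m with hm0 | hm1
              · omega
              · exact absurd (by simpa using hford 0 hm1) hz
          obtain ⟨c, hc⟩ := Stmt17Aux.extreme_ray t hfree d hd S hScpt V P hP f hf hf0 hext
            (v : A) v.2 hvord
          rw [Submodule.mem_span_singleton]
          exact ⟨c, Subtype.ext (by simpa using hc.symm)⟩
        have hfne : (⟨f, hfV⟩ : V) ≠ 0 := by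
          intro e0
          exact hf0 (by simpa using congrArg (Subtype.val) e0)
        have h1 : Module.finrank ℝ (LinearMap.ker Φ) ≤ 1 := by
          have := Submodule.finrank_mono hker
          rwa [finrank_span_singleton hfne] at this
        have h2 : Module.finrank ℝ (LinearMap.range Φ) ≤ ∑ i, ordf (ξ i) := by
          refine le_trans (Submodule.finrank_le _) ?_
          rw [Module.finrank_pi_fintype]
          exact le_of_eq (Finset.sum_congr rfl fun i _ => Module.finrank_fin_fun ℝ)
        have h3 := LinearMap.finrank_range_add_finrank_ker Φ
        rw [hV] at h3
        omega
      · intro i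
        exact Stmt17Aux.ordGe_of_mem_pow t hfree d hd (ξ i) f (ordf (ξ i)) (hmemf (ξ i))
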